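/- Let P be a row-stochastic S×S real matrix and fix an index n; without loss of generality take n to be the last index. Let P_n be the (S−1)×(S−1) matrix obtained from P by deleting its n-th row and n-th column, let p_nᵀ be the n-th row of P, and e_n the n-th standard basis column vector. If I − P_n is invertible, then I − P + e_n p_nᵀ is invertible and its inverse is the block matrix [[(I − P_n)^{-1}, 𝟙], [0, 1]], where 𝟙 is the all-ones column vector of length S−1. -/
import Mathlib


/-- A row-stochastic matrix: nonnegative entries, each row sums to 1. -/
def RowStochastic {S : ℕ} (P : Matrix (Fin S) (Fin S) ℝ) : Prop :=
  (∀ i j, 0 ≤ P i j) ∧ ∀ i, ∑ j, P i j = 1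

/-- The rank-one matrix `e_n p_nᵀ`, whose `n`-th row is the `n`-th row of `P`
and whose other rows vanish. -/
def rankOneRow {S : ℕ} (P : Matrix (Fin S) (Fin S) ℝ) (n : Fin S) :
    Matrix (Fin S) (Fin S) ℝ :=
  Matrix.of fun i j => if i = n then P n j else 0

/-- The principal submatrix of `P` obtained by deleting the last row and column. -/
def delLast {m : ℕ} (P : Matrix (Fin (m + 1)) (Fin (m + 1)) ℝ) :
    Matrix (Fin m) (Fin m) ℝ :=
  P.submatrix Fin.castSucc Fin.castSucc

section
open Matrix

lemma symm_castSucc {m : ℕ} (i : Fin m) :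
    (finSumFinEquiv (n := 1)).symm (Fin.castSucc i) = Sum.inl i := by
  simp [Fin.castSucc]

lemma symm_last (m : ℕ) : (finSumFinEquiv (n := 1)).symm (Fin.last m) = Sum.inr 0 := by
  have : Fin.last m = Fin.natAdd m (0 : Fin 1) := by ext; simp
  rw [this]; simp

lemma A_block {m : ℕ} (P : Matrix (Fin (m + 1)) (Fin (m + 1)) ℝ) :
    (1 - P + rankOneRow P (Fin.last m)) =
      Matrix.reindex finSumFinEquiv finSumFinEquiv
        (Matrix.fromBlocks (1 - delLast P)
          (Matrix.of fun i (_ : Fin 1) => -P (Fin.castSucc i) (Fin.last m)) 0 1) := by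
  ext i j
  rw [Matrix.reindex_apply, Matrix.submatrix_apply]
  induction i using Fin.lastCases <;> induction j using Fin.lastCases <;>
    simp [symm_castSucc, symm_last, rankOneRow, delLast, Matrix.one_apply,
      Fin.castSucc_lt_last, (Fin.castSucc_lt_last _).ne, (Fin.castSucc_lt_last _).ne',
      Matrix.sub_apply]

/-- Explicit block form of the inverse of `I − P + e_n p_nᵀ` for `n` the last index:
if `I − P_n` is invertible (where `P_n` deletes the `n`-th row and column), then
`I − P + e_n p_nᵀ` is invertible with inverse the block matrix
`[[(I − P_n)⁻¹, 𝟙], [0, 1]]`. -/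
theorem g_inverse_block_form
    {m : ℕ}
    (P : Matrix (Fin (m + 1)) (Fin (m + 1)) ℝ)
    (hP : RowStochastic P)
    (hInv : IsUnit (1 - delLast P)) :
    (1 - P + rankOneRow P (Fin.last m)) *
        (Matrix.reindex finSumFinEquiv finSumFinEquiv
          (Matrix.fromBlocks (1 - delLast P)⁻¹ (Matrix.of fun _ _ => (1 : ℝ)) 0 1)) = 1 ∧
      (Matrix.reindex finSumFinEquiv finSumFinEquiv
          (Matrix.fromBlocks (1 - delLast P)⁻¹ (Matrix.of fun _ _ => (1 : ℝ)) 0 1)) *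
        (1 - P + rankOneRow P (Fin.last m)) = 1 := by
  set M := 1 - delLast P with hM
  set C : Matrix (Fin m) (Fin 1) ℝ :=
    Matrix.of fun i (_ : Fin 1) => -P (Fin.castSucc i) (Fin.last m) with hC
  set J : Matrix (Fin m) (Fin 1) ℝ := Matrix.of fun _ _ => (1 : ℝ) with hJ
  have hdet : IsUnit M.det := (Matrix.isUnit_iff_isUnit_det M).1 hInv
  have hMC : M * J + C = 0 := by
    ext i k
    have hrow := hP.2 (Fin.castSucc i)
    rw [Fin.sum_univ_castSucc] at hrow
    simp only [Matrix.add_apply, Matrix.mul_apply, Matrix.of_apply, mul_one, hC, hJ, hM,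
      Matrix.sub_apply, Matrix.one_apply, delLast, Matrix.submatrix_apply, Matrix.zero_apply]
    rw [Finset.sum_sub_distrib, Finset.sum_ite_eq]
    simp only [Finset.mem_univ, if_true]
    linarith [hrow]
  have key : ∀ (X Y : Matrix (Fin m ⊕ Fin 1) (Fin m ⊕ Fin 1) ℝ),
      X * Y = 1 →
      (Matrix.reindex finSumFinEquiv finSumFinEquiv X) *
        (Matrix.reindex finSumFinEquiv finSumFinEquiv Y) = 1 := by
    intro X Y h
    rw [Matrix.reindex_apply, Matrix.reindex_apply, Matrix.submatrix_mul_equiv, h,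
      Matrix.submatrix_one_equiv]
  rw [A_block P]
  have e2 : M * J + C * (1 : Matrix (Fin 1) (Fin 1) ℝ) = 0 := by
    rw [Matrix.mul_one]; exact hMC
  have e3 : M⁻¹ * C + J * (1 : Matrix (Fin 1) (Fin 1) ℝ) = 0 := by
    have hCeq : C = -(M * J) := by
      rw [eq_neg_iff_add_eq_zero, add_comm]
      exact hMC
    rw [Matrix.mul_one, hCeq, Matrix.mul_neg, ← Matrix.mul_assoc,
      Matrix.nonsing_inv_mul _ hdet, Matrix.one_mul, neg_add_cancel]
  constructor
  · apply key
    rw [Matrix.fromBlocks_multiply, Matrix.mul_nonsing_inv _ hdet, e2]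
    simp [← Matrix.fromBlocks_one]
  · apply key
    rw [Matrix.fromBlocks_multiply, Matrix.nonsing_inv_mul _ hdet, e3]
    simp [← Matrix.fromBlocks_one]

end
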